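/- Let E be a cofinal directed graph containing an infinite path e₁e₂… with s⁻¹(s(eᵢ)) = {eᵢ} for all i ∈ ℕ. Then every infinite path μ in E has the form μ = α e_j e_{j+1} e_{j+2} … for some finite path α and some j ∈ ℕ; that is, some tail of μ coincides with a tail of e₁e₂…. -/

import Mathlib

/-- `IsPathFrom src rng l v w` means the finite list of edges `l` is a path
from vertex `v` to vertex `w` in the directed graph with source map `src` and
range map `rng`.  The empty list is the trivial path at a vertex (so `v = w`). -/
def IsPathFrom {V E : Type*} (src rng : E → V) (l : List E) (v w : V) : Prop :=
  l.Chain' (fun e f => rng e = src f) ∧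
  (∀ e ∈ l.head?, src e = v) ∧
  (∀ e ∈ l.getLast?, rng e = w) ∧
  (l = [] → v = w)

/-- `v ≥ w`: there is a path from `v` to `w`. -/
def Reaches {V E : Type*} (src rng : E → V) (v w : V) : Prop :=
  ∃ l : List E, IsPathFrom src rng l v w

/-- An infinite path `e₁e₂…` is a sequence of edges with `r(eᵢ) = s(eᵢ₊₁)`. -/
def IsInfPath {V E : Type*} (src rng : E → V) (e : ℕ → E) : Prop :=
  ∀ i, rng (e i) = src (e (i + 1))

/-- A graph is cofinal if every vertex can reach some vertex on every infinite path. -/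
def Cofinal {V E : Type*} (src rng : E → V) : Prop :=
  ∀ (v : V) (e : ℕ → E), IsInfPath src rng e → ∃ i, Reaches src rng v (src (e i))

/-- A sink is a vertex emitting no edges. -/
def IsSink {V E : Type*} (src : E → V) (v : V) : Prop := ∀ e, src e ≠ v

/-- A singular vertex is a sink or an infinite emitter. -/
def IsSingular {V E : Type*} (src : E → V) (v : V) : Prop :=
  IsSink src v ∨ {e | src e = v}.Infinite

/-- The graph has no cycles: no nonempty path begins and ends at the same vertex. -/
def HasNoCycles {V E : Type*} (src rng : E → V) : Prop :=
  ∀ (v : V) (l : List E), l ≠ [] → ¬ IsPathFrom src rng l v v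

/-- In a cofinal graph containing an infinite path `e₁e₂…` with
`s⁻¹(s(eᵢ)) = {eᵢ}` for all `i`, every infinite path `μ` has the form
`μ = α e_j e_{j+1} …` for some finite path `α` (an initial segment of `μ`) and
some `j`; in particular some tail of `μ` coincides with a tail of `e₁e₂…`. -/
lemma path_from_unique {V E : Type*} (src rng : E → V) (e : ℕ → E)
    (he : IsInfPath src rng e)
    (huniq : ∀ i : ℕ, {e' : E | src e' = src (e i)} = {e i}) :
    ∀ (l : List E) (n : ℕ) (w : V), IsPathFrom src rng l (src (e n)) w →
      w = src (e (n + l.length)) := by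
  intro l
  induction l with
  | nil => intro n w hp; simpa using (hp.2.2.2 rfl).symm
  | cons a l ih =>
    intro n w hp
    have ha : src a = src (e n) := hp.2.1 a rfl
    have haen : a = e n := by
      have : a ∈ {e' : E | src e' = src (e n)} := ha
      rwa [huniq n, Set.mem_singleton_iff] at this
    have hchain := hp.1
    rw [List.Chain', List.isChain_cons] at hchain
    have htail : IsPathFrom src rng l (src (e (n + 1))) w := by
      refine ⟨hchain.2, ?_, ?_, ?_⟩
      · intro f hf
        have := hchain.1 f hf
        rw [← this, haen, he n]
      · intro f hf
        apply hp.2.2.1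
        cases l with
        | nil => simp at hf
        | cons b t => simpa [List.getLast?_cons_cons] using hf
      · intro hl
        subst hl
        have : rng a = w := hp.2.2.1 a (by simp)
        rw [← this, haen, he n]
    have := ih (n + 1) w htail
    rw [this]
    congr 2
    simp only [List.length_cons]
    omega

lemma tail_eq {V E : Type*} (src rng : E → V) (e : ℕ → E)
    (he : IsInfPath src rng e)
    (huniq : ∀ i : ℕ, {e' : E | src e' = src (e i)} = {e i})
    (μ : ℕ → E) (hμ : IsInfPath src rng μ) (i n : ℕ)
    (h : src (μ i) = src (e n)) : ∀ k, μ (i + k) = e (n + k) := by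
  intro k
  induction k with
  | zero =>
    have : μ i ∈ {e' : E | src e' = src (e n)} := h
    rwa [huniq n, Set.mem_singleton_iff] at this
  | succ k ihk =>
    have hsrc : src (μ (i + k + 1)) = src (e (n + k + 1)) := by
      rw [← hμ (i + k), ihk, he (n + k)]
    have : μ (i + k + 1) ∈ {e' : E | src e' = src (e (n + k + 1))} := hsrc
    rw [huniq (n + k + 1), Set.mem_singleton_iff] at this
    convert this using 2 <;> omega

theorem infinite_paths_share_tail {V E : Type*} (src rng : E → V)
    (hcof : Cofinal src rng) (e : ℕ → E) (he : IsInfPath src rng e)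
    (huniq : ∀ i : ℕ, {e' : E | src e' = src (e i)} = {e i}) :
    ∀ μ : ℕ → E, IsInfPath src rng μ →
      ∃ (j : ℕ) (α : List E),
        (∀ (i : ℕ) (hi : i < α.length), μ i = α.get ⟨i, hi⟩) ∧
        (∀ i : ℕ, μ (α.length + i) = e (j + i)) := by
  intro μ hμ
  obtain ⟨i, l, hl⟩ := hcof (src (e 0)) μ hμ
  have hw : src (μ i) = src (e (0 + l.length)) :=
    path_from_unique src rng e he huniq l 0 (src (μ i)) hl
  refine ⟨l.length, (List.range i).map μ, ?_, ?_⟩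
  · intro k hk
    simp
  · intro k
    have := tail_eq src rng e he huniq μ hμ i l.length (by simpa using hw) k
    simpa using this
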